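/- Fix λ, μ ∈ ℝ and k ∈ ℤ. Let M(λ,μ) be the 4×4 real matrix (1/4)·[[1+e^{−λ}−2e^{−μ}, 1+e^{−λ}+2e^{−μ}, 1−e^{−λ}, 1−e^{−λ}], [1+e^{−λ}+2e^{−μ}, 1+e^{−λ}−2e^{−μ}, 1−e^{−λ}, 1−e^{−λ}], [1−e^{−λ}, 1−e^{−λ}, 1+e^{−λ}−2e^{−μ}, 1+e^{−λ}+2e^{−μ}], [1−e^{−λ}, 1−e^{−λ}, 1+e^{−λ}+2e^{−μ}, 1+e^{−λ}−2e^{−μ}]], and let Q_k be the 4×4 real matrix (1/4)·[[−λ−2μ, −λ+2μ, λ−2π(2k+1), λ+2π(2k+1)], [−λ+2μ, −λ−2μ, λ+2π(2k+1), λ−2π(2k+1)], [λ+2π(2k+1), λ−2π(2k+1), −λ−2μ, −λ+2μ], [λ−2π(2k+1), λ+2π(2k+1), −λ+2μ, −λ−2μ]]. Then exp(Q_k) = M(λ,μ). -/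

import Mathlib

open Real

/-- The matrix `M(λ,μ)` with eigenvalues `1, e^{-λ}, -e^{-μ}, -e^{-μ}`. -/
noncomputable def Mlm (l m : ℝ) : Matrix (Fin 4) (Fin 4) ℝ :=
  (1 / 4 : ℝ) •
    !![1 + exp (-l) - 2 * exp (-m), 1 + exp (-l) + 2 * exp (-m), 1 - exp (-l), 1 - exp (-l);
       1 + exp (-l) + 2 * exp (-m), 1 + exp (-l) - 2 * exp (-m), 1 - exp (-l), 1 - exp (-l);
       1 - exp (-l), 1 - exp (-l), 1 + exp (-l) - 2 * exp (-m), 1 + exp (-l) + 2 * exp (-m);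
       1 - exp (-l), 1 - exp (-l), 1 + exp (-l) + 2 * exp (-m), 1 + exp (-l) - 2 * exp (-m)]

/-- The family of real logarithms `Q_k` of `M(λ,μ)`. -/
noncomputable def Qk (l m : ℝ) (k : ℤ) : Matrix (Fin 4) (Fin 4) ℝ :=
  (1 / 4 : ℝ) •
    !![-l - 2 * m, -l + 2 * m, l - 2 * π * (2 * k + 1), l + 2 * π * (2 * k + 1);
       -l + 2 * m, -l - 2 * m, l + 2 * π * (2 * k + 1), l - 2 * π * (2 * k + 1);
       l + 2 * π * (2 * k + 1), l - 2 * π * (2 * k + 1), -l - 2 * m, -l + 2 * m;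
       l - 2 * π * (2 * k + 1), l + 2 * π * (2 * k + 1), -l + 2 * m, -l - 2 * m]

set_option maxHeartbeats 4000000

noncomputable def phiFun (p : ℝ × ℝ × ℂ) : Matrix (Fin 4) (Fin 4) ℝ :=
  (1 / 4 : ℝ) •
    !![p.1 + p.2.1 + 2*p.2.2.re, p.1 + p.2.1 - 2*p.2.2.re, p.1 - p.2.1 - 2*p.2.2.im, p.1 - p.2.1 + 2*p.2.2.im;
       p.1 + p.2.1 - 2*p.2.2.re, p.1 + p.2.1 + 2*p.2.2.re, p.1 - p.2.1 + 2*p.2.2.im, p.1 - p.2.1 - 2*p.2.2.im;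
       p.1 - p.2.1 + 2*p.2.2.im, p.1 - p.2.1 - 2*p.2.2.im, p.1 + p.2.1 + 2*p.2.2.re, p.1 + p.2.1 - 2*p.2.2.re;
       p.1 - p.2.1 - 2*p.2.2.im, p.1 - p.2.1 + 2*p.2.2.im, p.1 + p.2.1 - 2*p.2.2.re, p.1 + p.2.1 + 2*p.2.2.re]

noncomputable def phi : (ℝ × ℝ × ℂ) →+* Matrix (Fin 4) (Fin 4) ℝ where
  toFun := phiFun
  map_one' := by
    ext i j
    fin_cases i <;> fin_cases j <;>
      simp [phiFun, Matrix.one_apply, Matrix.vecHead, Matrix.vecTail] <;> norm_num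
  map_mul' p q := by
    ext i j
    fin_cases i <;> fin_cases j <;>
      · simp [phiFun, Matrix.mul_apply, Fin.sum_univ_four, Complex.mul_re, Complex.mul_im]
        ring
  map_zero' := by
    ext i j
    fin_cases i <;> fin_cases j <;> simp [phiFun, Matrix.vecHead, Matrix.vecTail]
  map_add' p q := by
    ext i j
    fin_cases i <;> fin_cases j <;>
      · simp [phiFun, Complex.add_re, Complex.add_im]
        ring

lemma phi_apply (p : ℝ × ℝ × ℂ) : phi p = phiFun p := rfl

lemma phi_continuous : Continuous phi := by
  show Continuous phiFun
  unfold phiFun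
  apply Continuous.fun_const_smul
  apply continuous_matrix
  intro i j
  fin_cases i <;> fin_cases j <;> simp <;> fun_prop

lemma exp_prod (a b : ℝ) (z : ℂ) :
    NormedSpace.exp ((a, b, z) : ℝ × ℝ × ℂ)
      = (Real.exp a, Real.exp b, Complex.exp z) := by
  have h1 : (NormedSpace.exp ((a, b, z) : ℝ × ℝ × ℂ)).1 = NormedSpace.exp a :=
    Prod.fst_exp _
  have h2 : (NormedSpace.exp ((a, b, z) : ℝ × ℝ × ℂ)).2 = NormedSpace.exp ((b, z) : ℝ × ℂ) :=
    Prod.snd_exp _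
  have h3 : (NormedSpace.exp ((b, z) : ℝ × ℂ)).1 = NormedSpace.exp b := Prod.fst_exp _
  have h4 : (NormedSpace.exp ((b, z) : ℝ × ℂ)).2 = NormedSpace.exp z := Prod.snd_exp _
  have e1 : NormedSpace.exp a = Real.exp a := (congrFun Real.exp_eq_exp_ℝ a).symm
  have e2 : NormedSpace.exp b = Real.exp b := (congrFun Real.exp_eq_exp_ℝ b).symm
  have e3 : NormedSpace.exp z = Complex.exp z := by
    rw [← congrFun Complex.exp_eq_exp_ℂ z]
  refine Prod.ext ?_ (Prod.ext ?_ ?_) <;> simp [h1, h2, h3, h4, e1, e2, e3]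

/-- For all `λ, μ ∈ ℝ` and `k ∈ ℤ`, `exp (Q_k) = M(λ,μ)`. -/
theorem stmt_10 (l m : ℝ) (k : ℤ) :
    NormedSpace.exp (Qk l m k) = Mlm l m := by
  have hQ : Qk l m k = phi (0, -l, ⟨-m, π * (2 * k + 1)⟩) := by
    ext i j
    rw [phi_apply]
    fin_cases i <;> fin_cases j <;>
      · simp [Qk, phiFun]
        try ring
  have hcos : Real.cos (π * (2 * k + 1)) = -1 := by
    have := Real.cos_int_mul_two_pi_add_pi k
    rw [show (k : ℝ) * (2 * π) + π = π * (2 * k + 1) by ring] at this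
    exact this
  have hsin : Real.sin (π * (2 * k + 1)) = 0 := by
    have := Real.sin_int_mul_pi (2 * k + 1)
    rw [show ((2 * k + 1 : ℤ) : ℝ) * π = π * (2 * k + 1) by push_cast; ring] at this
    exact this
  have hz : Complex.exp ⟨-m, π * (2 * k + 1)⟩ = ⟨-Real.exp (-m), 0⟩ := by
    apply Complex.ext
    · rw [Complex.exp_re]; simp [hcos]
    · rw [Complex.exp_im]; simp [hsin]
  rw [hQ]
  letI : SeminormedRing (Matrix (Fin 4) (Fin 4) ℝ) := Matrix.linftyOpSemiNormedRing
  letI : NormedRing (Matrix (Fin 4) (Fin 4) ℝ) := Matrix.linftyOpNormedRing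
  letI : NormedAlgebra ℝ (Matrix (Fin 4) (Fin 4) ℝ) := Matrix.linftyOpNormedAlgebra
  erw [← NormedSpace.map_exp phi phi_continuous]
  rw [exp_prod, hz]
  rw [phi_apply]
  ext i j
  fin_cases i <;> fin_cases j <;>
    · simp [phiFun, Mlm]
      try ring
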